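/- Let R > 0, let l ≥ 1 and m ≥ 0 be integers, and let κ, Q be real numbers. Suppose V, W, U : ℝ → ℝ are differentiable at every r ∈ (0,R) and satisfy, for all r ∈ (0,R): (i) W(r) + (l+1)·V(r) = 0, and (ii) 0 = −[ ( κ·(l+1)/2 + m )·V'(r) + m·(l+1)·V(r)/r − ( κ·(l+1)/2 )·W(r)/r ] + (l+2)·Q·[ U'(r) + (l+1)·U(r)/r ]. Then the function F(r) := −( κ·(l+1)/2 + m )·V(r) + (l+2)·Q·U(r) satisfies F'(r) + ((l+1)/r)·F(r) = 0 for all r ∈ (0,R), and consequently r ↦ r^(l+1)·F(r) is constant on (0,R). -/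

import Mathlib

open Set

/-- For a polar-led hybrid mode (`m ≥ 0`), the combination
`F = −(κ(l+1)/2 + m)·V + (l+2)·Q·U` satisfies `F' + ((l+1)/r)·F = 0` on `(0,R)`,
hence `r^(l+1) · F` is constant there. -/
theorem stmt_4 (R : ℝ) (hR : 0 < R) (l m : ℕ) (hl : 1 ≤ l)
    (κ Q : ℝ) (V W U V' W' U' : ℝ → ℝ)
    (hV : ∀ r ∈ Ioo (0:ℝ) R, HasDerivAt V (V' r) r)
    (hW : ∀ r ∈ Ioo (0:ℝ) R, HasDerivAt W (W' r) r)
    (hU : ∀ r ∈ Ioo (0:ℝ) R, HasDerivAt U (U' r) r)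
    (h1 : ∀ r ∈ Ioo (0:ℝ) R, W r + ((l:ℝ) + 1) * V r = 0)
    (h2 : ∀ r ∈ Ioo (0:ℝ) R,
      0 = -((κ * ((l:ℝ) + 1) / 2 + m) * V' r + (m:ℝ) * ((l:ℝ) + 1) * V r / r
            - (κ * ((l:ℝ) + 1) / 2) * W r / r)
          + ((l:ℝ) + 2) * Q * (U' r + ((l:ℝ) + 1) * U r / r)) :
    (∀ r ∈ Ioo (0:ℝ) R,
      (-(κ * ((l:ℝ) + 1) / 2 + m) * V' r + ((l:ℝ) + 2) * Q * U' r)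
        + (((l:ℝ) + 1) / r) *
            (-(κ * ((l:ℝ) + 1) / 2 + m) * V r + ((l:ℝ) + 2) * Q * U r) = 0) ∧
    (∀ r ∈ Ioo (0:ℝ) R, ∀ s ∈ Ioo (0:ℝ) R,
      r ^ (l + 1) * (-(κ * ((l:ℝ) + 1) / 2 + m) * V r + ((l:ℝ) + 2) * Q * U r)
        = s ^ (l + 1) * (-(κ * ((l:ℝ) + 1) / 2 + m) * V s + ((l:ℝ) + 2) * Q * U s)) := by
  set a : ℝ := κ * ((l:ℝ) + 1) / 2 + m with ha
  have key : ∀ r ∈ Ioo (0:ℝ) R,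
      (-a * V' r + ((l:ℝ) + 2) * Q * U' r)
        + (((l:ℝ) + 1) / r) * (-a * V r + ((l:ℝ) + 2) * Q * U r) = 0 := by
    intro r hr
    have hr0 : (r:ℝ) ≠ 0 := ne_of_gt hr.1
    have e1 := h1 r hr
    have e2 := h2 r hr
    have hWr : W r = -(((l:ℝ) + 1) * V r) := by linarith
    rw [hWr] at e2
    simp only [ha] at e2 ⊢
    field_simp at e2
    have h2r : (2*r*r) ≠ 0 := by positivity
    refine mul_left_cancel₀ h2r ?_
    rw [mul_zero]
    field_simp
    linear_combination (-r) * e2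
  refine ⟨key, ?_⟩
  -- the function r ↦ r^(l+1) * F r has zero derivative on (0,R)
  set F : ℝ → ℝ := fun r => -a * V r + ((l:ℝ) + 2) * Q * U r with hF
  have hderiv : ∀ r ∈ Ioo (0:ℝ) R,
      HasDerivAt (fun r => r ^ (l + 1) * F r) 0 r := by
    intro r hr
    have hr0 : (r:ℝ) ≠ 0 := ne_of_gt hr.1
    have hF' : HasDerivAt F (-a * V' r + ((l:ℝ) + 2) * Q * U' r) r :=
      ((hV r hr).const_mul (-a)).add ((hU r hr).const_mul (((l:ℝ) + 2) * Q))
    have hpow : HasDerivAt (fun r : ℝ => r ^ (l + 1)) (((l:ℝ) + 1) * r ^ l) r := by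
      simpa using hasDerivAt_pow (l + 1) r
    have := hpow.mul hF'
    refine this.congr_deriv ?_
    symm
    have hk := key r hr
    have hrpow : r ^ (l+1) = r ^ l * r := pow_succ r l
    rw [hrpow]
    field_simp at hk
    simp only [hF]
    linear_combination (-(r ^ l)) * hk
  intro r hr s hs
  have hconv : Convex ℝ (Ioo (0:ℝ) R) := convex_Ioo 0 R
  have := hconv.norm_image_sub_le_of_norm_hasDerivWithin_le
    (f := fun r => r ^ (l + 1) * F r) (f' := fun _ => 0) (C := 0)
    (fun x hx => (hderiv x hx).hasDerivWithinAt)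
    (fun x _ => by simp) hs hr
  have : ‖r ^ (l + 1) * F r - s ^ (l + 1) * F s‖ ≤ 0 := by simpa using this
  have h3 := sub_eq_zero.mp (norm_le_zero_iff.mp this)
  show r ^ (l+1) * F r = s ^ (l+1) * F s
  linarith
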